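/- Fix an adiabatic index γ with 1 < γ ≤ 5/3 and let z > 0. Then for every real w one has 12w² − (12(γ+1)z + 24)w + 6(γ²+1)z² + 3(3γ²+2γ+3)z + 3(γ²+3) > 0. Consequently the cubic P(w,z) = 4w³ − (6(γ+1)z+12)w² + (6(γ²+1)z² + 3(3γ²+2γ+3)z + 3(γ²+3))w − γ(γ+1)(2z³ + 3(γ+1)z² + 3(γ+1)z + 2γ), whose derivative in w is the displayed quadratic, is strictly increasing as a function of w on ℝ. -/

import Mathlib

/-- positivity of ∂_w P and strict monotonicity of the cubic P(·,z). -/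
theorem P_deriv_pos_and_strictMono (γ z : ℝ) (hγ1 : 1 < γ) (hγ2 : γ ≤ 5 / 3) (hz : 0 < z) :
    (∀ w : ℝ, 0 < 12 * w ^ 2 - (12 * (γ + 1) * z + 24) * w
        + 6 * (γ ^ 2 + 1) * z ^ 2 + 3 * (3 * γ ^ 2 + 2 * γ + 3) * z + 3 * (γ ^ 2 + 3))
    ∧ StrictMono (fun w : ℝ =>
        4 * w ^ 3 - (6 * (γ + 1) * z + 12) * w ^ 2
          + (6 * (γ ^ 2 + 1) * z ^ 2 + 3 * (3 * γ ^ 2 + 2 * γ + 3) * z + 3 * (γ ^ 2 + 3)) * w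
          - γ * (γ + 1) * (2 * z ^ 3 + 3 * (γ + 1) * z ^ 2 + 3 * (γ + 1) * z + 2 * γ)) := by
  have hq : ∀ w : ℝ, 0 < 12 * w ^ 2 - (12 * (γ + 1) * z + 24) * w
      + 6 * (γ ^ 2 + 1) * z ^ 2 + 3 * (3 * γ ^ 2 + 2 * γ + 3) * z + 3 * (γ ^ 2 + 3) := by
    intro w
    nlinarith [sq_nonneg (2 * w - (γ + 1) * z - 2), sq_nonneg ((γ - 1) * z),
      mul_pos (sub_pos.mpr hγ1) hz, mul_pos (mul_pos (sub_pos.mpr hγ1) hz) hz,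
      mul_pos (mul_pos (sub_pos.mpr hγ1) (sub_pos.mpr hγ1)) (mul_pos hz hz),
      sub_pos.mpr hγ1]
  refine ⟨hq, strictMono_of_deriv_pos ?_⟩
  intro w
  have h1 : HasDerivAt (fun w : ℝ =>
      4 * w ^ 3 - (6 * (γ + 1) * z + 12) * w ^ 2
        + (6 * (γ ^ 2 + 1) * z ^ 2 + 3 * (3 * γ ^ 2 + 2 * γ + 3) * z + 3 * (γ ^ 2 + 3)) * w
        - γ * (γ + 1) * (2 * z ^ 3 + 3 * (γ + 1) * z ^ 2 + 3 * (γ + 1) * z + 2 * γ))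
      (12 * w ^ 2 - (12 * (γ + 1) * z + 24) * w
        + 6 * (γ ^ 2 + 1) * z ^ 2 + 3 * (3 * γ ^ 2 + 2 * γ + 3) * z + 3 * (γ ^ 2 + 3)) w := by
    have h := ((((hasDerivAt_pow 3 w).const_mul 4).sub
        ((hasDerivAt_pow 2 w).const_mul (6 * (γ + 1) * z + 12))).add
        ((hasDerivAt_id w).const_mul
          (6 * (γ ^ 2 + 1) * z ^ 2 + 3 * (3 * γ ^ 2 + 2 * γ + 3) * z + 3 * (γ ^ 2 + 3)))).sub_const
        (γ * (γ + 1) * (2 * z ^ 3 + 3 * (γ + 1) * z ^ 2 + 3 * (γ + 1) * z + 2 * γ))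
    refine h.congr_deriv ?_
    simp only [Nat.reduceSub, Nat.cast_ofNat]
    ring
  rw [h1.deriv]
  exact hq w
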